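/- arXiv:2101.03890 — 5 statements merged into one kernel-verified Lean document; each statement's English description precedes it below -/
import Mathlib

section
/- Let (X_i)_{i≥0} be positive, independent, identically distributed real random variables with E[X_i] = μ_X > 0, let (L_i)_{i≥1} be positive, independent, identically distributed real random variables with E[L_i] = μ_L < ∞, and let l_0 > 0 be a constant. Define T = min{ n ≥ 1 : X_0/l_0 + X_1/(l_0+L_1) + X_2/(l_0+L_1+L_2) + ... + X_{n-1}/(l_0+L_1+...+L_{n-1}) ≥ 1 }, with the convention min ∅ = ∞. Then T < ∞ almost surely; i.e., almost surely there exists n ≥ 1 such that the partial sum Σ_{i=0}^{n-1} X_i/(l_0 + Σ_{j=1}^{i} L_j) is at least 1. -/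
open MeasureTheory ProbabilityTheory Filter Finset Topology

/-- Deterministic core: if the averages of `x` tend to `μX > 0` and those of `l`
tend to `μL`, with all terms positive, then the "ant" partial sums reach `1`. -/
lemma ant_key (x l : ℕ → ℝ) (l0 μX μL : ℝ) (hl0 : 0 < l0)
    (hx : ∀ i, 0 < x i) (hl : ∀ i, 0 < l i)
    (hA : Tendsto (fun n : ℕ => (∑ i ∈ Finset.range n, x i) / n) atTop (𝓝 μX))
    (hB : Tendsto (fun n : ℕ => (∑ j ∈ Finset.range n, l j) / n) atTop (𝓝 μL))
    (hμX : 0 < μX) :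
    ∃ n : ℕ, 1 ≤ n ∧ 1 ≤ ∑ i ∈ Finset.range n, x i / (l0 + ∑ j ∈ Finset.range i, l j) := by
  set A : ℕ → ℝ := fun n => ∑ i ∈ Finset.range n, x i with hAdef
  set B : ℕ → ℝ := fun n => ∑ j ∈ Finset.range n, l j with hBdef
  set S : ℕ → ℝ := fun n => ∑ i ∈ Finset.range n, x i / (l0 + B i) with hSdef
  have hBnonneg : ∀ n, 0 ≤ B n := fun n =>
    Finset.sum_nonneg fun j _ => (hl j).le
  have hBmono : Monotone B := fun a b hab =>
    Finset.sum_le_sum_of_subset_of_nonneg (Finset.range_subset_range.2 hab)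
      (fun j _ _ => (hl j).le)
  have hden : ∀ i, 0 < l0 + B i := fun i => by linarith [hBnonneg i]
  have hterm : ∀ i, 0 < x i / (l0 + B i) := fun i => div_pos (hx i) (hden i)
  have hSnonneg : ∀ n, 0 ≤ S n := fun n =>
    Finset.sum_nonneg fun i _ => (hterm i).le
  -- μL ≥ 0
  have hμL : 0 ≤ μL := by
    refine le_of_tendsto_of_tendsto tendsto_const_nhds hB ?_
    filter_upwards [eventually_gt_atTop 0] with n hn
    exact div_nonneg (hBnonneg n) (Nat.cast_nonneg n)
  set D : ℝ := μL + 1 with hD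
  have hDpos : (0:ℝ) < D := by linarith
  set c : ℝ := μX / (8 * D) with hc
  have hcpos : 0 < c := div_pos hμX (by linarith)
  -- eventual bounds from the limits
  have hAev : ∀ᶠ n : ℕ in atTop, |A n / n - μX| < μX / 8 := by
    have := hA
    rw [Metric.tendsto_atTop] at this
    obtain ⟨N, hN⟩ := this (μX / 8) (by linarith)
    exact eventually_atTop.2 ⟨N, fun n hn => hN n hn⟩
  have hBev : ∀ᶠ n : ℕ in atTop, B n / n < D := by
    have := hB
    rw [Metric.tendsto_atTop] at this
    obtain ⟨N, hN⟩ := this 1 one_pos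
    refine eventually_atTop.2 ⟨N, fun n hn => ?_⟩
    have := hN n hn
    rw [Real.dist_eq] at this
    have := abs_lt.1 this
    linarith [this.1, this.2]
  obtain ⟨N0, hN0⟩ := eventually_atTop.1 (hAev.and hBev)
  obtain ⟨Nl, hNl⟩ := exists_nat_ge l0
  set N : ℕ := max (max N0 Nl) 1 with hN
  have hN1 : 1 ≤ N := le_max_right _ _
  have hNN0 : N0 ≤ N := le_trans (le_max_left _ _) (le_max_left _ _)
  have hNNl : Nl ≤ N := le_trans (le_max_right _ _) (le_max_left _ _)
  -- key block estimate
  have hblock : ∀ m : ℕ, N ≤ m → S m + c ≤ S (2 * m) := by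
    intro m hm
    have hmpos : 0 < m := lt_of_lt_of_le hN1 hm
    have hmR : (0:ℝ) < (m:ℝ) := by exact_mod_cast hmpos
    have hAm := (hN0 m (le_trans hNN0 hm)).1
    have hA2m := (hN0 (2*m) (le_trans (le_trans hNN0 hm) (by omega))).1
    have hB2m := (hN0 (2*m) (le_trans (le_trans hNN0 hm) (by omega))).2
    have h2mR : ((2*m : ℕ):ℝ) = 2 * (m:ℝ) := by push_cast; ring
    -- A m ≤ m (μX + μX/8)
    have hAm' : A m ≤ m * (μX + μX/8) := by
      have := (abs_lt.1 hAm).2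
      have h := (div_lt_iff₀ hmR).1 (by linarith : A m / m < μX + μX/8)
      linarith [h]
    have hA2m' : (2*(m:ℝ)) * (μX - μX/8) ≤ A (2*m) := by
      have := (abs_lt.1 hA2m).1
      have hpos : (0:ℝ) < ((2*m:ℕ):ℝ) := by rw [h2mR]; linarith
      have h := (lt_div_iff₀ hpos).1 (by linarith : μX - μX/8 < A (2*m) / ((2*m:ℕ):ℝ))
      rw [h2mR] at h; linarith
    have hB2m' : B (2*m) ≤ 2*(m:ℝ) * D := by
      have hpos : (0:ℝ) < ((2*m:ℕ):ℝ) := by rw [h2mR]; linarith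
      have h := (div_lt_iff₀ hpos).1 hB2m
      rw [h2mR] at h; linarith
    have hl0m : l0 ≤ 2*(m:ℝ)*D := by
      have : l0 ≤ (Nl:ℝ) := hNl
      have hm' : (Nl:ℝ) ≤ (m:ℝ) := by exact_mod_cast le_trans hNNl hm
      nlinarith [hDpos]
    have hdenbound : l0 + B (2*m) ≤ 4*(m:ℝ)*D := by linarith
    have hdenpos : (0:ℝ) < l0 + B (2*m) := hden _
    -- block sum lower bound
    have hsplit : S (2*m) - S m = ∑ i ∈ Finset.Ico m (2*m), x i / (l0 + B i) := by
      rw [hSdef]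
      simp only
      rw [← Finset.sum_range_add_sum_Ico _ (by omega : m ≤ 2*m)]
      ring
    have hstep1 : (∑ i ∈ Finset.Ico m (2*m), x i / (l0 + B (2*m)))
        ≤ ∑ i ∈ Finset.Ico m (2*m), x i / (l0 + B i) := by
      refine Finset.sum_le_sum fun i hi => ?_
      have hi' : i ≤ 2*m := le_of_lt (Finset.mem_Ico.1 hi).2
      exact div_le_div_of_nonneg_left (hx i).le (hden i)
        (by linarith [hBmono hi'])
    have hsum : ∑ i ∈ Finset.Ico m (2*m), x i = A (2*m) - A m := by
      rw [hAdef]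
      simp only
      rw [← Finset.sum_range_add_sum_Ico _ (by omega : m ≤ 2*m)]
      ring
    have hstep2 : (A (2*m) - A m) / (l0 + B (2*m))
        ≤ ∑ i ∈ Finset.Ico m (2*m), x i / (l0 + B i) := by
      calc (A (2*m) - A m) / (l0 + B (2*m))
          = ∑ i ∈ Finset.Ico m (2*m), x i / (l0 + B (2*m)) := by
            rw [← Finset.sum_div, hsum]
        _ ≤ _ := hstep1
    have hnum : (m:ℝ) * (μX/2) ≤ A (2*m) - A m := by nlinarith [hmR, hμX]
    have hfrac : c ≤ (A (2*m) - A m) / (l0 + B (2*m)) := by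
      rw [hc, div_le_div_iff₀ (by linarith) hdenpos]
      calc μX * (l0 + B (2*m)) ≤ μX * (4*(m:ℝ)*D) := by
            exact mul_le_mul_of_nonneg_left hdenbound hμX.le
        _ = ((m:ℝ) * (μX/2)) * (8*D) := by ring
        _ ≤ (A (2*m) - A m) * (8*D) := by
            exact mul_le_mul_of_nonneg_right hnum (by linarith)
    linarith [hsplit ▸ le_trans hfrac hstep2]
  -- iterate: S (2^k * N) ≥ k * c
  have hiter : ∀ k : ℕ, (k:ℝ) * c ≤ S (2^k * N) := by
    intro k
    induction k with
    | zero => simpa using hSnonneg N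
    | succ k ih =>
      have hge : N ≤ 2^k * N := Nat.le_mul_of_pos_left N (Nat.pow_pos (by norm_num))
      have := hblock (2^k * N) hge
      have heq : 2 * (2^k * N) = 2^(k+1) * N := by ring
      rw [heq] at this
      push_cast
      linarith
  obtain ⟨k, hk⟩ := exists_nat_ge (1 / c)
  have hk1 : 1 ≤ (k:ℝ) * c := (div_le_iff₀ hcpos).1 hk
  refine ⟨2^k * N, ?_, ?_⟩
  · exact le_trans hN1 (Nat.le_mul_of_pos_left N (Nat.pow_pos (by norm_num)))
  · exact le_trans hk1 (hiter k)

/-- **The stochastic "ant on a rubber rope", Theorem 1.**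
`X i` is the distance the ant crawls during the `(i+1)`-th second,
`L j` is the amount by which the rope stretches at the end of the `(j+1)`-th second
(so `L 0, L 1, …` play the role of `L₁, L₂, …`), and the rope has length
`l₀ + L₁ + ⋯ + Lᵢ = l0 + ∑ j in range i, L j` after `i` stretchings.
Almost surely there is a time `n ≥ 1` at which the accumulated fraction of the rope
covered by the ant, `∑_{i=0}^{n-1} X i / (l0 + ∑_{j<i} L j)`, reaches `1`;
i.e. `T = min {n : partial sum ≥ 1} < ∞` almost surely. -/
theorem ant_on_rubber_rope_reaches_end
    {Ω : Type*} [MeasurableSpace Ω] (μ : Measure Ω) [IsProbabilityMeasure μ]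
    (X L : ℕ → Ω → ℝ) (l0 μX μL : ℝ) (hl0 : 0 < l0)
    (hXmeas : ∀ i, Measurable (X i)) (hLmeas : ∀ i, Measurable (L i))
    (hXpos : ∀ i, ∀ᵐ ω ∂μ, 0 < X i ω) (hLpos : ∀ i, ∀ᵐ ω ∂μ, 0 < L i ω)
    (hXindep : iIndepFun X μ)
    (hLindep : iIndepFun L μ)
    (hXident : ∀ i, IdentDistrib (X i) (X 0) μ μ)
    (hLident : ∀ i, IdentDistrib (L i) (L 0) μ μ)
    (hXint : ∀ i, Integrable (X i) μ) (hLint : ∀ i, Integrable (L i) μ)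
    (hXmean : ∀ i, ∫ ω, X i ω ∂μ = μX) (hLmean : ∀ i, ∫ ω, L i ω ∂μ = μL)
    (hμX : 0 < μX) :
    ∀ᵐ ω ∂μ, ∃ n : ℕ, 1 ≤ n ∧
      1 ≤ ∑ i ∈ Finset.range n, X i ω / (l0 + ∑ j ∈ Finset.range i, L j ω) := by
  have hXpair : Pairwise (Function.onFun (IndepFun · · μ) X) := fun i j hij =>
    hXindep.indepFun hij
  have hLpair : Pairwise (Function.onFun (IndepFun · · μ) L) := fun i j hij =>
    hLindep.indepFun hij
  have hSLX := strong_law_ae_real X (hXint 0) hXpair hXident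
  have hSLL := strong_law_ae_real L (hLint 0) hLpair hLident
  rw [hXmean 0] at hSLX
  rw [hLmean 0] at hSLL
  filter_upwards [hSLX, hSLL, ae_all_iff.2 hXpos, ae_all_iff.2 hLpos]
    with ω hX hL hxp hlp
  exact ant_key (fun i => X i ω) (fun j => L j ω) l0 μX μL hl0 hxp hlp hX hL hμX
end

section
/- Let (X_i)_{i≥0} be positive, independent, identically distributed real random variables with E[X_i] = μ_X > 0, let (L_i)_{i≥1} be positive, independent, identically distributed real random variables with E[L_i] = μ_L < ∞, and let l_0 > 0 be a constant. Then, almost surely, the series X_0/l_0 + X_1/(l_0+L_1) + X_2/(l_0+L_1+L_2) + ... diverges to ∞; i.e., almost surely Σ_{i=0}^{∞} X_i/(l_0 + Σ_{j=1}^{i} L_j) = ∞. -/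
open MeasureTheory ProbabilityTheory Filter Finset
open Topology

/-- Deterministic core: if the Cesàro averages of positive sequences `x` and `ℓ` converge,
with positive limit for `x`, then `∑ x i / (l0 + ∑_{j<i} ℓ j)` diverges. -/
lemma ant_det (x ℓ : ℕ → ℝ) (l0 a b : ℝ) (hl0 : 0 < l0)
    (hx : ∀ i, 0 < x i) (hℓ : ∀ i, 0 < ℓ i) (ha : 0 < a)
    (hsx : Tendsto (fun n : ℕ => (∑ i ∈ range n, x i) / n) atTop (𝓝 a))
    (hsl : Tendsto (fun n : ℕ => (∑ i ∈ range n, ℓ i) / n) atTop (𝓝 b)) :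
    Tendsto (fun n => ∑ i ∈ range n, x i / (l0 + ∑ j ∈ range i, ℓ j)) atTop atTop := by
  set t : ℕ → ℝ := fun n => ∑ j ∈ range n, ℓ j with ht
  set s : ℕ → ℝ := fun n => ∑ i ∈ range n, x i with hs
  set D : ℕ → ℝ := fun i => l0 + t i with hD
  set T : ℕ → ℝ := fun n => ∑ i ∈ range n, x i / D i with hT
  have htnonneg : ∀ n, 0 ≤ t n := fun n => Finset.sum_nonneg (fun i _ => (hℓ i).le)
  have hDpos : ∀ i, 0 < D i := fun i => add_pos_of_pos_of_nonneg hl0 (htnonneg i)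
  have hDmono : Monotone D := by
    intro m n hmn
    exact add_le_add_right (Finset.sum_le_sum_of_subset_of_nonneg
      (Finset.range_subset_range.2 hmn) (fun i _ _ => (hℓ i).le)) l0
  have hTmono : Monotone T := by
    apply monotone_nat_of_le_succ
    intro n
    rw [hT]
    simp only [Finset.sum_range_succ]
    nlinarith [div_pos (hx n) (hDpos n)]
  -- bounds from Cesàro convergence
  set M : ℝ := max b 0 + 1 with hM
  have hMpos : 0 < M := by positivity
  have hbM : b < M := by
    have := le_max_left b 0; linarith
  obtain ⟨N1, hN1⟩ : ∃ N, ∀ n ≥ N, (3 * a / 4) ≤ s n / n ∧ s n / n ≤ 5 * a / 4 := by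
    have h1 := (hsx.eventually (eventually_gt_nhds (by linarith : 3 * a / 4 < a)))
    have h2 := (hsx.eventually (eventually_lt_nhds (by linarith : a < 5 * a / 4)))
    rcases ((h1.and h2).and (eventually_ge_atTop 1)).exists_forall_of_atTop with ⟨N, hN⟩
    exact ⟨N, fun n hn => ⟨(hN n hn).1.1.le, (hN n hn).1.2.le⟩⟩
  obtain ⟨N2, hN2⟩ : ∃ N, ∀ n ≥ N, t n / n ≤ M := by
    rcases (hsl.eventually (eventually_lt_nhds hbM)).exists_forall_of_atTop with ⟨N, hN⟩
    exact ⟨N, fun n hn => (hN n hn).le⟩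
  set N : ℕ := max (max N1 N2) 1 with hNdef
  have hN1' : N1 ≤ N := le_trans (le_max_left _ _) (le_max_left _ _)
  have hN2' : N2 ≤ N := le_trans (le_max_right _ _) (le_max_left _ _)
  have hNone : 1 ≤ N := le_max_right _ _
  set c : ℝ := (a / 4) / (l0 + 2 * M) with hc
  have hcpos : 0 < c := by positivity
  -- key increment estimate
  have key : ∀ n, N ≤ n → T n + c ≤ T (2 * n) := by
    intro n hn
    have hn1 : (1 : ℕ) ≤ n := le_trans hNone hn
    have hnR : (1 : ℝ) ≤ (n : ℝ) := by exact_mod_cast hn1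
    have hnpos : (0 : ℝ) < n := by linarith
    have h2nN : N ≤ 2 * n := le_trans hn (by omega)
    have h2n : (0 : ℝ) < (2 * n : ℕ) := by push_cast; linarith
    have hs1 : (3 * a / 4) * (2 * n : ℕ) ≤ s (2 * n) := by
      have := (hN1 (2 * n) (le_trans hN1' h2nN)).1
      calc (3 * a / 4) * (2 * n : ℕ) ≤ (s (2 * n) / (2 * n : ℕ)) * (2 * n : ℕ) := by
            apply mul_le_mul_of_nonneg_right this h2n.le
        _ = s (2 * n) := by field_simp
    have hs2 : s n ≤ (5 * a / 4) * n := by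
      have := (hN1 n (le_trans hN1' hn)).2
      calc s n = (s n / n) * n := by field_simp
        _ ≤ (5 * a / 4) * n := mul_le_mul_of_nonneg_right this hnpos.le
    have hsdiff : (n : ℝ) * (a / 4) ≤ s (2 * n) - s n := by
      push_cast at hs1 ⊢; nlinarith
    have hDbound : D (2 * n) ≤ (n : ℝ) * (l0 + 2 * M) := by
      have h1 : t (2 * n) ≤ M * (2 * n : ℕ) := by
        have := hN2 (2 * n) (le_trans hN2' h2nN)
        calc t (2 * n) = (t (2 * n) / (2 * n : ℕ)) * (2 * n : ℕ) := by field_simp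
          _ ≤ M * (2 * n : ℕ) := mul_le_mul_of_nonneg_right this h2n.le
      have hl0n : l0 ≤ (n : ℝ) * l0 := le_mul_of_one_le_left hl0.le hnR
      push_cast at h1
      have : D (2 * n) = l0 + t (2 * n) := rfl
      rw [this]; nlinarith
    have hDb2 : 0 < D (2 * n) := hDpos _
    have hsum : T (2 * n) - T n = ∑ i ∈ Finset.Ico n (2 * n), x i / D i :=
      (Finset.sum_Ico_eq_sub _ (by omega : n ≤ 2 * n)).symm
    have hlow : ∑ i ∈ Finset.Ico n (2 * n), x i / D (2 * n)
        ≤ ∑ i ∈ Finset.Ico n (2 * n), x i / D i := by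
      apply Finset.sum_le_sum
      intro i hi
      exact div_le_div_of_nonneg_left (hx i).le (hDpos i)
        (hDmono (by exact (Finset.mem_Ico.1 hi).2.le))
    have heq : ∑ i ∈ Finset.Ico n (2 * n), x i / D (2 * n)
        = (s (2 * n) - s n) / D (2 * n) := by
      rw [← Finset.sum_div, Finset.sum_Ico_eq_sub x (by omega : n ≤ 2 * n)]
    have hfrac : c ≤ (s (2 * n) - s n) / D (2 * n) := by
      have hc' : c = ((n : ℝ) * (a / 4)) / ((n : ℝ) * (l0 + 2 * M)) := by
        rw [hc]; rw [mul_div_mul_left _ _ (ne_of_gt hnpos)]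
      rw [hc']
      exact div_le_div₀ (by nlinarith) hsdiff hDb2 hDbound
    linarith [hsum, hlow, heq, hfrac]
  -- lower bound along the dyadic subsequence
  have hTnonneg : ∀ n, 0 ≤ T n :=
    fun n => Finset.sum_nonneg fun i _ => (div_pos (hx i) (hDpos i)).le
  have dyadic : ∀ k : ℕ, (k : ℝ) * c ≤ T (2 ^ k * N) := by
    intro k
    induction k with
    | zero => simpa using hTnonneg N
    | succ k ih =>
      have h1 : N ≤ 2 ^ k * N := Nat.le_mul_of_pos_left N (by positivity)
      have h2 := key (2 ^ k * N) h1
      have h3 : 2 * (2 ^ k * N) = 2 ^ (k + 1) * N := by ring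
      push_cast
      rw [← h3]
      linarith
  -- conclude
  rw [tendsto_atTop]
  intro b'
  obtain ⟨k, hk⟩ := exists_nat_ge (b' / c)
  have hkc : b' ≤ (k : ℝ) * c := by
    rw [div_le_iff₀ hcpos] at hk; linarith
  filter_upwards [eventually_ge_atTop (2 ^ k * N)] with n hn
  calc b' ≤ (k : ℝ) * c := hkc
    _ ≤ T (2 ^ k * N) := dyadic k
    _ ≤ T n := hTmono hn

/-- **Lemma 2: the stochastic "ant on a rubber rope" series diverges.** -/
theorem ant_on_rubber_rope_series_diverges
    {Ω : Type*} [MeasurableSpace Ω] (μ : Measure Ω) [IsProbabilityMeasure μ]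
    (X L : ℕ → Ω → ℝ) (l0 μX μL : ℝ) (hl0 : 0 < l0)
    (hXmeas : ∀ i, Measurable (X i)) (hLmeas : ∀ i, Measurable (L i))
    (hXpos : ∀ i, ∀ᵐ ω ∂μ, 0 < X i ω) (hLpos : ∀ i, ∀ᵐ ω ∂μ, 0 < L i ω)
    (hXindep : iIndepFun X μ)
    (hLindep : iIndepFun L μ)
    (hXident : ∀ i, IdentDistrib (X i) (X 0) μ μ)
    (hLident : ∀ i, IdentDistrib (L i) (L 0) μ μ)
    (hXint : ∀ i, Integrable (X i) μ) (hLint : ∀ i, Integrable (L i) μ)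
    (hXmean : ∀ i, ∫ ω, X i ω ∂μ = μX) (hLmean : ∀ i, ∫ ω, L i ω ∂μ = μL)
    (hμX : 0 < μX) :
    ∀ᵐ ω ∂μ, Tendsto
      (fun n => ∑ i ∈ Finset.range n, X i ω / (l0 + ∑ j ∈ Finset.range i, L j ω))
      atTop atTop := by
  have hXslln := strong_law_ae_real X (hXint 0)
    (fun i j hij => hXindep.indepFun hij) hXident
  have hLslln := strong_law_ae_real L (hLint 0)
    (fun i j hij => hLindep.indepFun hij) hLident
  rw [show μ[X 0] = μX from hXmean 0] at hXslln
  rw [show μ[L 0] = μL from hLmean 0] at hLslln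
  filter_upwards [hXslln, hLslln, ae_all_iff.2 hXpos, ae_all_iff.2 hLpos]
    with ω hX hL hXp hLp
  exact ant_det (fun i => X i ω) (fun i => L i ω) l0 μX μL hl0 hXp hLp hμX hX hL
end

section
/- Let l_0 > 0, let (l_i)_{i≥1} and (x_i)_{i≥1} be sequences of positive reals, and suppose there are real numbers μ_X > 0 and μ_L with 0 < μ_L < ∞ such that (x_1 + ... + x_n)/n → μ_X and (l_0 + l_1 + ... + l_n)/n → μ_L as n → ∞. Then the series Σ_{i=1}^{∞} x_i/(l_0 + l_1 + ... + l_i) diverges to ∞. -/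
open Finset Filter

/-- **Deterministic core of Lemma 2.**
`l i` and `x i` for `i ≥ 1` are positive reals (the stretches and steps), `l0 > 0`
is the initial rope length, and the running averages converge:
`(x₁ + ⋯ + xₙ)/n → μX > 0` and `(l0 + l₁ + ⋯ + lₙ)/n → μL` with `0 < μL < ∞`.
Then the series `∑_{i≥1} x i / (l0 + l₁ + ⋯ + lᵢ)` diverges to `∞`,
i.e. its partial sums tend to infinity. -/
theorem ant_series_diverges_of_cesaro
    (l0 : ℝ) (hl0 : 0 < l0) (l x : ℕ → ℝ)
    (hl : ∀ i, 1 ≤ i → 0 < l i) (hx : ∀ i, 1 ≤ i → 0 < x i)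
    (μX μL : ℝ) (hμX : 0 < μX) (hμL : 0 < μL)
    (hxavg : Tendsto (fun n : ℕ => (∑ i ∈ Finset.Icc 1 n, x i) / n) atTop (nhds μX))
    (hlavg : Tendsto (fun n : ℕ => (l0 + ∑ i ∈ Finset.Icc 1 n, l i) / n) atTop (nhds μL)) :
    Tendsto
      (fun n : ℕ => ∑ i ∈ Finset.Icc 1 n, x i / (l0 + ∑ j ∈ Finset.Icc 1 i, l j))
      atTop atTop := by
  set X : ℕ → ℝ := fun n => ∑ i ∈ Finset.Icc 1 n, x i with hXdef
  set L : ℕ → ℝ := fun n => l0 + ∑ i ∈ Finset.Icc 1 n, l i with hLdef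
  set S : ℕ → ℝ := fun n => ∑ i ∈ Finset.Icc 1 n, x i / L i with hSdef
  have hLpos : ∀ n, 0 < L n := by
    intro n
    have : 0 ≤ ∑ i ∈ Finset.Icc 1 n, l i :=
      Finset.sum_nonneg fun i hi => (hl i (Finset.mem_Icc.mp hi).1).le
    simp only [hLdef]; linarith
  have hLmono : Monotone L := by
    intro a b hab
    have : ∑ i ∈ Finset.Icc 1 a, l i ≤ ∑ i ∈ Finset.Icc 1 b, l i :=
      Finset.sum_le_sum_of_subset_of_nonneg (Finset.Icc_subset_Icc_right hab)
        (fun i hi _ => (hl i (Finset.mem_Icc.mp hi).1).le)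
    simp only [hLdef]; linarith
  have hterm : ∀ i, 1 ≤ i → 0 < x i / L i := fun i hi => div_pos (hx i hi) (hLpos i)
  have hSmono : Monotone S := by
    intro a b hab
    exact Finset.sum_le_sum_of_subset_of_nonneg (Finset.Icc_subset_Icc_right hab)
      (fun i hi _ => (hterm i (Finset.mem_Icc.mp hi).1).le)
  have h1 : ∀ᶠ n : ℕ in atTop, 3/4 * μX ≤ X n / n :=
    hxavg.eventually (eventually_ge_nhds (by linarith))
  have h1b : ∀ᶠ n : ℕ in atTop, X n / n ≤ 5/4 * μX :=
    hxavg.eventually (eventually_le_nhds (by linarith))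
  have h2 : ∀ᶠ n : ℕ in atTop, L n / n ≤ 3/2 * μL :=
    hlavg.eventually (eventually_le_nhds (by linarith))
  obtain ⟨N0, hN0⟩ := eventually_atTop.mp ((h1.and h1b).and h2)
  set N : ℕ := max N0 1 with hNdef
  set c : ℝ := μX / (12 * μL) with hcdef
  have hc : 0 < c := div_pos hμX (by linarith)
  have hblock : ∀ m, N ≤ m → S m + c ≤ S (2 * m) := by
    intro m hm
    have hm1 : 1 ≤ m := le_trans (le_max_right _ _) hm
    have hmN0 : N0 ≤ m := le_trans (le_max_left _ _) hm
    have hmN0' : N0 ≤ 2 * m := by omega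
    have hmpos : (0 : ℝ) < m := by exact_mod_cast hm1
    obtain ⟨⟨hXlo, hXhi⟩, _⟩ := hN0 m hmN0
    obtain ⟨⟨hXlo2, _⟩, hLhi2⟩ := hN0 (2 * m) hmN0'
    have h2m : ((2 * m : ℕ) : ℝ) = 2 * (m : ℝ) := by push_cast; ring
    -- numeric bounds
    have hXm_hi : X m ≤ 5/4 * μX * m := by
      rw [div_le_iff₀ hmpos] at hXhi; linarith
    have hX2m_lo : 3/4 * μX * (2 * (m : ℝ)) ≤ X (2 * m) := by
      rw [le_div_iff₀ (by rw [h2m]; linarith)] at hXlo2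
      rw [h2m] at hXlo2; linarith
    have hL2m_hi : L (2 * m) ≤ 3 * μL * m := by
      rw [div_le_iff₀ (by rw [h2m]; linarith)] at hLhi2
      calc L (2 * m) ≤ 3 / 2 * μL * ((2 * m : ℕ) : ℝ) := hLhi2
        _ = 3 * μL * m := by push_cast; ring
    -- split the sum
    have hIcc : ∀ k : ℕ, Finset.Icc 1 k = Finset.Ioc 0 k := fun k => Finset.Icc_add_one_left_eq_Ioc 0 k
    have hsplitS : S (2 * m) = S m + ∑ i ∈ Finset.Ioc m (2 * m), x i / L i := by
      simp only [hSdef, hIcc]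
      rw [← Finset.sum_Ioc_consecutive _ (Nat.zero_le m) (by omega)]
    have hsplitX : X (2 * m) = X m + ∑ i ∈ Finset.Ioc m (2 * m), x i := by
      simp only [hXdef, hIcc]
      rw [← Finset.sum_Ioc_consecutive _ (Nat.zero_le m) (by omega)]
    have hsum_ge : (X (2 * m) - X m) / L (2 * m) ≤ ∑ i ∈ Finset.Ioc m (2 * m), x i / L i := by
      have hstep : ∀ i ∈ Finset.Ioc m (2 * m), x i / L (2 * m) ≤ x i / L i := by
        intro i hi
        obtain ⟨hi1, hi2⟩ := Finset.mem_Ioc.mp hi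
        have : 1 ≤ i := by omega
        gcongr
        · exact (hx i this).le
        · exact hLpos i
        · exact hLmono hi2
      calc (X (2 * m) - X m) / L (2 * m)
          = ∑ i ∈ Finset.Ioc m (2 * m), x i / L (2 * m) := by
            rw [← Finset.sum_div]; congr 1; rw [hsplitX]; ring
        _ ≤ _ := Finset.sum_le_sum hstep
    have hc_le : c ≤ (X (2 * m) - X m) / L (2 * m) := by
      rw [le_div_iff₀ (hLpos _)]
      have h1' : c * L (2 * m) ≤ c * (3 * μL * m) :=
        mul_le_mul_of_nonneg_left hL2m_hi hc.le
      have h2' : c * (3 * μL * m) = μX * m / 4 := by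
        rw [hcdef]; field_simp; ring
      nlinarith
    rw [hsplitS]; linarith
  have hiter : ∀ k : ℕ, S N + k * c ≤ S (N * 2 ^ k) := by
    intro k
    induction k with
    | zero => simp
    | succ k ih =>
      have hNle : N ≤ N * 2 ^ k := Nat.le_mul_of_pos_right N (Nat.pow_pos (by norm_num))
      have hb := hblock (N * 2 ^ k) hNle
      have heq : 2 * (N * 2 ^ k) = N * 2 ^ (k + 1) := by ring
      rw [heq] at hb
      push_cast
      push_cast at ih
      linarith
  apply tendsto_atTop_atTop_of_monotone hSmono
  intro b
  obtain ⟨k, hk⟩ := exists_nat_ge ((b - S N) / c)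
  refine ⟨N * 2 ^ k, ?_⟩
  have h3 : (b - S N) / c * c ≤ (k : ℝ) * c := mul_le_mul_of_nonneg_right hk hc.le
  rw [div_mul_cancel₀ _ hc.ne'] at h3
  have := hiter k
  linarith
end

section
/- Let (x_n)_{n≥1} be a sequence of reals, μ_X a real number, ε > 0, and N a positive integer such that |(x_1 + ... + x_n)/n − μ_X| < ε for all n ≥ N. Then for every integer i ≥ 1, the i-th block average satisfies |(x_{(i−1)N+1} + x_{(i−1)N+2} + ... + x_{iN})/N − μ_X| < (2i − 1)·ε. -/
open Finset

/-- **Block-average estimate (inequality (8) in the proof of Lemma 2).**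
If all running averages `(x₁ + ⋯ + xₙ)/n` with `n ≥ N` are within `ε` of `μX`,
then for every `i ≥ 1` the average of the `i`-th block of `N` consecutive terms,
`(x_{(i-1)N+1} + ⋯ + x_{iN})/N`, is within `(2i - 1)ε` of `μX`. -/
theorem block_average_estimate
    (x : ℕ → ℝ) (μX ε : ℝ) (hε : 0 < ε) (N : ℕ) (hN : 0 < N)
    (h : ∀ n : ℕ, N ≤ n → |(∑ k ∈ Finset.Icc 1 n, x k) / n - μX| < ε) :
    ∀ i : ℕ, 1 ≤ i →
      |(∑ k ∈ Finset.Icc ((i - 1) * N + 1) (i * N), x k) / N - μX|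
        < (2 * (i : ℝ) - 1) * ε := by
  have hN' : (0:ℝ) < (N:ℝ) := by exact_mod_cast hN
  have habs : ∀ n : ℕ, N ≤ n →
      |(∑ k ∈ Finset.Icc 1 n, x k) - (n:ℝ) * μX| < (n:ℝ) * ε := by
    intro n hn
    have hn' : (0:ℝ) < (n:ℝ) := by exact_mod_cast lt_of_lt_of_le hN hn
    have := h n hn
    have heq : (∑ k ∈ Finset.Icc 1 n, x k) - (n:ℝ) * μX
        = (n:ℝ) * ((∑ k ∈ Finset.Icc 1 n, x k) / n - μX) := by
      field_simp
    rw [heq, abs_mul, abs_of_pos hn']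
    exact (mul_lt_mul_iff_right₀ hn').mpr this
  intro i hi
  obtain ⟨j, rfl⟩ : ∃ j, i = j + 1 := ⟨i - 1, by omega⟩
  simp only [Nat.add_sub_cancel]
  set A := ∑ k ∈ Finset.Icc 1 ((j+1)*N), x k with hA
  set B := ∑ k ∈ Finset.Icc 1 (j*N), x k with hB
  have hsum : ∑ k ∈ Finset.Icc (j * N + 1) ((j+1) * N), x k = A - B := by
    have h1 : (∑ k ∈ Finset.Ioc 0 (j*N), x k) + (∑ k ∈ Finset.Ioc (j*N) ((j+1)*N), x k)
        = ∑ k ∈ Finset.Ioc 0 ((j+1)*N), x k :=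
      Finset.sum_Ioc_consecutive _ (Nat.zero_le _) (Nat.mul_le_mul_right _ (by omega))
    have e1 : ∀ k : ℕ, Finset.Icc 1 k = Finset.Ioc 0 k := fun k => Finset.Icc_add_one_left_eq_Ioc 0 k
    have e2 : Finset.Icc (j*N+1) ((j+1)*N) = Finset.Ioc (j*N) ((j+1)*N) :=
      Finset.Icc_add_one_left_eq_Ioc _ _
    rw [hA, hB, e1, e1, e2]
    linarith
  rw [hsum]
  have hAbound : |A - (((j:ℝ)+1) * N) * μX| < ((j:ℝ)+1) * N * ε := by
    have := habs ((j+1)*N) (Nat.le_mul_of_pos_left N (by omega))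
    push_cast at this
    convert this using 3 <;> ring
  have hBbound : |B - ((j:ℝ) * N) * μX| ≤ (j:ℝ) * N * ε := by
    rcases Nat.eq_zero_or_pos j with hj | hj
    · subst hj
      simp [hB]
    · have := habs (j*N) (Nat.le_mul_of_pos_left N hj)
      push_cast at this
      have h2 : |B - ((j:ℝ) * N) * μX| < (j:ℝ) * N * ε := by
        convert this using 3 <;> ring
      exact le_of_lt h2
  have key : (A - B)/N - μX
      = (A - (((j:ℝ)+1) * N) * μX)/N - (B - ((j:ℝ) * N) * μX)/N := by
    field_simp
    ring
  rw [key]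
  have tri : |(A - (((j:ℝ)+1) * N) * μX)/N - (B - ((j:ℝ) * N) * μX)/N|
      ≤ |A - (((j:ℝ)+1) * N) * μX|/N + |B - ((j:ℝ) * N) * μX|/N := by
    calc |(A - (((j:ℝ)+1) * N) * μX)/N - (B - ((j:ℝ) * N) * μX)/N|
        ≤ |(A - (((j:ℝ)+1) * N) * μX)/N| + |(B - ((j:ℝ) * N) * μX)/N| := abs_sub _ _
      _ = |A - (((j:ℝ)+1) * N) * μX|/N + |B - ((j:ℝ) * N) * μX|/N := by
          rw [abs_div, abs_div, abs_of_pos hN']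
  have h3 : |A - (((j:ℝ)+1) * N) * μX|/N + |B - ((j:ℝ) * N) * μX|/N
      < (2 * ((j:ℝ)+1) - 1) * ε := by
    have d1 : |A - (((j:ℝ)+1) * N) * μX|/N < ((j:ℝ)+1) * ε := by
      rw [div_lt_iff₀ hN']
      calc |A - (((j:ℝ)+1) * N) * μX| < ((j:ℝ)+1) * N * ε := hAbound
        _ = ((j:ℝ)+1) * ε * N := by ring
    have d2 : |B - ((j:ℝ) * N) * μX|/N ≤ (j:ℝ) * ε := by
      rw [div_le_iff₀ hN']
      calc |B - ((j:ℝ) * N) * μX| ≤ (j:ℝ) * N * ε := hBbound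
        _ = (j:ℝ) * ε * N := by ring
    linarith
  calc _ ≤ _ := tri
    _ < (2 * ((j:ℝ)+1) - 1) * ε := h3
    _ = (2 * ((j:ℕ)+1:ℕ) - 1 : ℝ) * ε := by push_cast; ring
end

section
/- Let l_0 > 0, let (l_i)_{i≥1} and (x_i)_{i≥1} be sequences of positive reals, let μ_X > 0, μ_L > 0, ε > 0 with ε < μ_X, and let N be a positive integer such that |(l_0 + l_1 + ... + l_n)/n − μ_L| < ε and |(x_1 + ... + x_n)/n − μ_X| < ε for all n ≥ N. Then for every positive integer m, Σ_{i=1}^{mN} x_i/(l_0 + l_1 + ... + l_i) ≥ Σ_{k=1}^{m} (1/k) · (μ_X − (2k−1)ε)/(μ_L + ε). -/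
open Finset

/-- **The chain of lower bounds in the proof of Lemma 2.**
If for all `n ≥ N` the averages `(l0 + l₁ + ⋯ + lₙ)/n` and `(x₁ + ⋯ + xₙ)/n`
are within `ε` of `μL` and `μX` respectively (with `0 < ε < μX`), then for every
`m ≥ 1`, grouping the first `mN` terms of the series into `m` blocks of `N` terms gives
`∑_{i=1}^{mN} xᵢ/(l0 + l₁ + ⋯ + lᵢ) ≥ ∑_{k=1}^{m} (1/k) · (μX - (2k-1)ε)/(μL + ε)`. -/
theorem ant_series_block_lower_bound
    (l0 : ℝ) (hl0 : 0 < l0) (l x : ℕ → ℝ)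
    (hl : ∀ i, 1 ≤ i → 0 < l i) (hx : ∀ i, 1 ≤ i → 0 < x i)
    (μX μL ε : ℝ) (hμX : 0 < μX) (hμL : 0 < μL) (hε : 0 < ε) (hεX : ε < μX)
    (N : ℕ) (hN : 0 < N)
    (hlavg : ∀ n : ℕ, N ≤ n → |(l0 + ∑ i ∈ Finset.Icc 1 n, l i) / n - μL| < ε)
    (hxavg : ∀ n : ℕ, N ≤ n → |(∑ i ∈ Finset.Icc 1 n, x i) / n - μX| < ε) :
    ∀ m : ℕ, 1 ≤ m →
      ∑ k ∈ Finset.Icc 1 m, (1 / (k : ℝ)) * ((μX - (2 * (k : ℝ) - 1) * ε) / (μL + ε))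
        ≤ ∑ i ∈ Finset.Icc 1 (m * N), x i / (l0 + ∑ j ∈ Finset.Icc 1 i, l j) := by
  have hicc : ∀ n : ℕ, Finset.Icc 1 n = Finset.Ioc 0 n := by
    intro n; rw [← Finset.Icc_add_one_left_eq_Ioc]; rfl
  set L : ℕ → ℝ := fun n => l0 + ∑ j ∈ Finset.Icc 1 n, l j with hLdef
  set S : ℕ → ℝ := fun n => ∑ i ∈ Finset.Icc 1 n, x i with hSdef
  have hμLε : 0 < μL + ε := by linarith
  have hLpos : ∀ n, 0 < L n := by
    intro n
    have h0 : 0 ≤ ∑ j ∈ Finset.Icc 1 n, l j :=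
      Finset.sum_nonneg fun i hi => (hl i (Finset.mem_Icc.mp hi).1).le
    simp only [hLdef]; linarith
  have hLmono : Monotone L := by
    intro a b hab
    simp only [hLdef]
    have : ∑ j ∈ Finset.Icc 1 a, l j ≤ ∑ j ∈ Finset.Icc 1 b, l j :=
      Finset.sum_le_sum_of_subset_of_nonneg (Finset.Icc_subset_Icc_right hab)
        fun i hi _ => (hl i (Finset.mem_Icc.mp hi).1).le
    linarith
  have hnpos : ∀ n : ℕ, N ≤ n → (0:ℝ) < n := by
    intro n hn; exact_mod_cast Nat.lt_of_lt_of_le hN hn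
  have hLub : ∀ n : ℕ, N ≤ n → L n < n * (μL + ε) := by
    intro n hn
    have hp := hnpos n hn
    have h2 : (l0 + ∑ i ∈ Finset.Icc 1 n, l i) / n < μL + ε := by
      have h := (abs_lt.mp (hlavg n hn)).2; linarith
    rw [div_lt_iff₀ hp] at h2
    simp only [hLdef]; nlinarith
  have hSlb : ∀ n : ℕ, N ≤ n → (n:ℝ) * (μX - ε) < S n := by
    intro n hn
    have hp := hnpos n hn
    have h2 : μX - ε < (∑ i ∈ Finset.Icc 1 n, x i) / n := by
      have h := (abs_lt.mp (hxavg n hn)).1; linarith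
    rw [lt_div_iff₀ hp] at h2
    simp only [hSdef]; nlinarith
  have hSub : ∀ n : ℕ, N ≤ n → S n < (n:ℝ) * (μX + ε) := by
    intro n hn
    have hp := hnpos n hn
    have h2 : (∑ i ∈ Finset.Icc 1 n, x i) / n < μX + ε := by
      have h := (abs_lt.mp (hxavg n hn)).2; linarith
    rw [div_lt_iff₀ hp] at h2
    simp only [hSdef]; nlinarith
  -- block lemma
  have block : ∀ k : ℕ, 1 ≤ k →
      (1 / (k:ℝ)) * ((μX - (2 * (k:ℝ) - 1) * ε) / (μL + ε))
        ≤ ∑ i ∈ Finset.Ioc ((k-1)*N) (k*N), x i / L i := by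
    intro k hk
    have hab : (k-1)*N ≤ k*N := Nat.mul_le_mul_right N (Nat.sub_le k 1)
    have hbN : N ≤ k*N := Nat.le_mul_of_pos_left N hk
    have hkpos : (0:ℝ) < k := by exact_mod_cast hk
    have hNpos : (0:ℝ) < N := by exact_mod_cast hN
    have hbpos : (0:ℝ) < (k*N : ℕ) := by push_cast; positivity
    -- numerator bound
    have hsplit : S ((k-1)*N) + ∑ i ∈ Finset.Ioc ((k-1)*N) (k*N), x i = S (k*N) := by
      simp only [hSdef, hicc]
      exact Finset.sum_Ioc_consecutive _ (Nat.zero_le _) hab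
    have hnum : (N:ℝ) * (μX - (2 * (k:ℝ) - 1) * ε) ≤ ∑ i ∈ Finset.Ioc ((k-1)*N) (k*N), x i := by
      have hSb := hSlb (k*N) hbN
      rcases Nat.eq_or_lt_of_le hk with h1 | h2
      · -- k = 1
        have hk1 : k = 1 := h1.symm
        subst hk1
        have hS0 : S ((1-1)*N) = 0 := by simp [hSdef]
        push_cast at hSb ⊢
        nlinarith [hsplit, hS0, hSb]
      · -- k ≥ 2
        have haN : N ≤ (k-1)*N := Nat.le_mul_of_pos_left N (by omega)
        have hSa := hSub ((k-1)*N) haN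
        have hcast : (((k-1)*N : ℕ) : ℝ) = ((k:ℝ) - 1) * N := by
          push_cast [Nat.cast_sub hk]; ring
        rw [hcast] at hSa
        have hcb : (((k*N : ℕ)) : ℝ) = (k:ℝ) * N := by push_cast; ring
        rw [hcb] at hSb
        nlinarith [hsplit]
    -- denominator bound, per term
    have hterm : ∀ i ∈ Finset.Ioc ((k-1)*N) (k*N),
        x i / (((k*N:ℕ):ℝ) * (μL + ε)) ≤ x i / L i := by
      intro i hi
      obtain ⟨hi1, hi2⟩ := Finset.mem_Ioc.mp hi
      have hxi : 0 < x i := hx i (by omega)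
      have hLi : L i ≤ ((k*N:ℕ):ℝ) * (μL + ε) :=
        le_trans (hLmono hi2) (hLub (k*N) hbN).le
      gcongr
      exact hLpos i
    calc (1 / (k:ℝ)) * ((μX - (2 * (k:ℝ) - 1) * ε) / (μL + ε))
        = ((N:ℝ) * (μX - (2 * (k:ℝ) - 1) * ε)) / (((k*N:ℕ):ℝ) * (μL + ε)) := by
          push_cast
          field_simp
      _ ≤ (∑ i ∈ Finset.Ioc ((k-1)*N) (k*N), x i) / (((k*N:ℕ):ℝ) * (μL + ε)) := by
          gcongr
      _ = ∑ i ∈ Finset.Ioc ((k-1)*N) (k*N), x i / (((k*N:ℕ):ℝ) * (μL + ε)) :=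
          Finset.sum_div _ _ _
      _ ≤ ∑ i ∈ Finset.Ioc ((k-1)*N) (k*N), x i / L i := Finset.sum_le_sum hterm
  -- main induction
  have main : ∀ m : ℕ,
      ∑ k ∈ Finset.Icc 1 m, (1 / (k : ℝ)) * ((μX - (2 * (k : ℝ) - 1) * ε) / (μL + ε))
        ≤ ∑ i ∈ Finset.Icc 1 (m * N), x i / L i := by
    intro m
    induction m with
    | zero => simp
    | succ m ih =>
      rw [hicc, hicc] at *
      have hsplit : (∑ i ∈ Finset.Ioc 0 (m*N), x i / L i)
          + ∑ i ∈ Finset.Ioc (m*N) ((m+1)*N), x i / L i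
          = ∑ i ∈ Finset.Ioc 0 ((m+1)*N), x i / L i :=
        Finset.sum_Ioc_consecutive _ (Nat.zero_le _)
          (Nat.mul_le_mul_right N (Nat.le_succ m))
      have hb := block (m+1) (by omega)
      have heq : (m+1-1)*N = m*N := by simp
      rw [heq] at hb
      have htop : ∑ k ∈ Finset.Ioc 0 (m+1), (1 / (k : ℝ)) * ((μX - (2 * (k : ℝ) - 1) * ε) / (μL + ε))
          = (∑ k ∈ Finset.Ioc 0 m, (1 / (k : ℝ)) * ((μX - (2 * (k : ℝ) - 1) * ε) / (μL + ε)))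
            + (1 / ((m+1) : ℝ)) * ((μX - (2 * ((m+1) : ℝ) - 1) * ε) / (μL + ε)) := by
        rw [← Finset.Icc_add_one_left_eq_Ioc, ← Finset.Icc_add_one_left_eq_Ioc, Finset.sum_Icc_succ_top (by omega)]
        push_cast; ring_nf
        congr 1; exact Finset.sum_congr rfl fun _ _ => by ring
      rw [htop, ← hsplit]
      push_cast at hb ⊢
      linarith
  intro m _
  exact main m
end
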